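/- If u : ℝ^N → ℝ is measurable and ‖u‖_X = 0, then u = 0 almost everywhere in ℝ^N. -/

import Mathlib

open MeasureTheory Set Filter Topology
open scoped ENNReal

noncomputable section

abbrev Eucl (N : ℕ) := EuclideanSpace ℝ (Fin N)

variable {N : ℕ}

/-- `Q = ℝ^{2N} \ (CΩ)^2`. -/
def Qset (Ω : Set (Eucl N)) : Set (Eucl N × Eucl N) := (Ωᶜ ×ˢ Ωᶜ)ᶜ

/-- `φ_{x,y}(t) = a(x,y,|t|) t` for `t ≠ 0`, `φ_{x,y}(0) = 0`. -/
def phiF (a : Eucl N → Eucl N → ℝ → ℝ) (x y : Eucl N) (t : ℝ) : ℝ :=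
  if t = 0 then 0 else a x y |t| * t

/-- `Φ_{x,y}(t) = ∫₀ᵗ φ_{x,y}(τ) dτ`. -/
def PhiF (a : Eucl N → Eucl N → ℝ → ℝ) (x y : Eucl N) (t : ℝ) : ℝ :=
  ∫ τ in (0:ℝ)..t, phiF a x y τ

/-- Gagliardo-type modular on `Q` at scale `lam`. -/
def modQ (a : Eucl N → Eucl N → ℝ → ℝ) (s : ℝ) (Ω : Set (Eucl N))
    (u : Eucl N → ℝ) (lam : ℝ) : ℝ≥0∞ :=
  ∫⁻ p in Qset Ω, ENNReal.ofReal
    (PhiF a p.1 p.2 (|u p.1 - u p.2| / (lam * dist p.1 p.2 ^ s)) / dist p.1 p.2 ^ (N : ℝ))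

/-- Gagliardo-type modular on `Ω × Ω` at scale `lam`. -/
def modOO (a : Eucl N → Eucl N → ℝ → ℝ) (s : ℝ) (Ω : Set (Eucl N))
    (u : Eucl N → ℝ) (lam : ℝ) : ℝ≥0∞ :=
  ∫⁻ p in Ω ×ˢ Ω, ENNReal.ofReal
    (PhiF a p.1 p.2 (|u p.1 - u p.2| / (lam * dist p.1 p.2 ^ s)) / dist p.1 p.2 ^ (N : ℝ))

/-- modular `∫_Ω Φ̂_x(|u|/λ)`. -/
def modO (a : Eucl N → Eucl N → ℝ → ℝ) (Ω : Set (Eucl N))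
    (u : Eucl N → ℝ) (lam : ℝ) : ℝ≥0∞ :=
  ∫⁻ x in Ω, ENNReal.ofReal (PhiF a x x (|u x| / lam))

/-- modular `∫_{CΩ} β Φ̂_x(|u|/λ)`. -/
def modB (a : Eucl N → Eucl N → ℝ → ℝ) (Ω : Set (Eucl N)) (β : Eucl N → ℝ)
    (u : Eucl N → ℝ) (lam : ℝ) : ℝ≥0∞ :=
  ∫⁻ x in Ωᶜ, ENNReal.ofReal (β x * PhiF a x x (|u x| / lam))

/-- Luxemburg infimum of a modular family (`∞` if no admissible `λ`). -/
def lux (m : ℝ → ℝ≥0∞) : ℝ≥0∞ :=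
  sInf {l : ℝ≥0∞ | ∃ lam : ℝ, 0 < lam ∧ l = ENNReal.ofReal lam ∧ m lam ≤ 1}

/-- `‖u‖_X = [u]_{s,Φ,Q} + ‖u‖_{Φ̂} + ‖u‖_{Φ̂,β,CΩ}`. -/
def normX (a : Eucl N → Eucl N → ℝ → ℝ) (s : ℝ) (Ω : Set (Eucl N)) (β : Eucl N → ℝ)
    (u : Eucl N → ℝ) : ℝ≥0∞ :=
  lux (modQ a s Ω u) + lux (modO a Ω u) + lux (modB a Ω β u)

/-- the modular `ρ_s`. -/
def rhoS (a : Eucl N → Eucl N → ℝ → ℝ) (s : ℝ) (Ω : Set (Eucl N)) (β : Eucl N → ℝ)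
    (u : Eucl N → ℝ) : ℝ≥0∞ :=
  modQ a s Ω u 1 + modO a Ω u 1 + modB a Ω β u 1

/-- the modular norm `‖u‖ = inf {λ > 0 : ρ_s(u/λ) ≤ 1}`. -/
def normM (a : Eucl N → Eucl N → ℝ → ℝ) (s : ℝ) (Ω : Set (Eucl N)) (β : Eucl N → ℝ)
    (u : Eucl N → ℝ) : ℝ≥0∞ :=
  sInf {l : ℝ≥0∞ | ∃ lam : ℝ, 0 < lam ∧ l = ENNReal.ofReal lam ∧
    rhoS a s Ω β (fun x => u x / lam) ≤ 1}

/-- `X` described via the norm `‖·‖_X`. -/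
def XsetX (a : Eucl N → Eucl N → ℝ → ℝ) (s : ℝ) (Ω : Set (Eucl N)) (β : Eucl N → ℝ) :
    Set (Eucl N → ℝ) :=
  {u | Measurable u ∧ normX a s Ω β u < ⊤}

/-- `X` described via the modular norm `‖·‖`. -/
def XsetM (a : Eucl N → Eucl N → ℝ → ℝ) (s : ℝ) (Ω : Set (Eucl N)) (β : Eucl N → ℝ) :
    Set (Eucl N → ℝ) :=
  {u | Measurable u ∧ (∃ lam : ℝ, 0 < lam ∧ rhoS a s Ω β (fun x => u x / lam) < ⊤) ∧
    normM a s Ω β u < ⊤}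

/-- the fractional difference quotient `D^s u`. -/
def Du (s : ℝ) (u : Eucl N → ℝ) (p : Eucl N × Eucl N) : ℝ :=
  (u p.1 - u p.2) / dist p.1 p.2 ^ s

/-- `a(x,y,|D^s u|) D^s u`, with the convention that it vanishes when `u x = u y`. -/
def Ku (a : Eucl N → Eucl N → ℝ → ℝ) (s : ℝ) (u : Eucl N → ℝ) (p : Eucl N × Eucl N) : ℝ :=
  if u p.1 = u p.2 then 0 else a p.1 p.2 |Du s u p| * Du s u p

/-- the form `A_s(u,v)`. -/
def Aform (a : Eucl N → Eucl N → ℝ → ℝ) (s : ℝ) (Ω : Set (Eucl N)) (β : Eucl N → ℝ)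
    (u v : Eucl N → ℝ) : ℝ :=
  (1/2) * (∫ p in Qset Ω, Ku a s u p * Du s v p / dist p.1 p.2 ^ (N : ℝ))
  + (∫ x in Ω, a x x |u x| * u x * v x)
  + ∫ x in Ωᶜ, β x * (a x x |u x| * u x * v x)

/-- the nonlocal normal derivative `𝒩^s_a u` on `CΩ`. -/
def Nop (a : Eucl N → Eucl N → ℝ → ℝ) (s : ℝ) (Ω : Set (Eucl N)) (u : Eucl N → ℝ)
    (x : Eucl N) : ℝ :=
  ∫ y in Ω, Ku a s u (x, y) / dist x y ^ ((N : ℝ) + s)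

/-- `F(x,t) = ∫₀ᵗ f(x,τ) dτ`. -/
def Ff (f : Eucl N → ℝ → ℝ) (x : Eucl N) (t : ℝ) : ℝ := ∫ τ in (0:ℝ)..t, f x τ

/-- the energy functional `J_λ`. -/
def Jlam (a : Eucl N → Eucl N → ℝ → ℝ) (s : ℝ) (Ω : Set (Eucl N)) (β : Eucl N → ℝ)
    (f : Eucl N → ℝ → ℝ) (lam : ℝ) (u : Eucl N → ℝ) : ℝ :=
  (1/2) * (modQ a s Ω u 1).toReal + (modO a Ω u 1).toReal + (modB a Ω β u 1).toReal
    - lam * ∫ x in Ω, Ff f x (u x)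

/-- the variable-exponent Luxemburg norm `‖u‖_{q(·)}` on `Ω`. -/
def normq (Ω : Set (Eucl N)) (q : Eucl N → ℝ) (u : Eucl N → ℝ) : ℝ≥0∞ :=
  sInf {l : ℝ≥0∞ | ∃ lam : ℝ, 0 < lam ∧ l = ENNReal.ofReal lam ∧
    (∫⁻ x in Ω, ENNReal.ofReal (|u x / lam| ^ q x)) ≤ 1}


section auxStatement0
variable {N : ℕ}

lemma phiF_zero' (a : Eucl N → Eucl N → ℝ → ℝ) (x y : Eucl N) : phiF a x y 0 = 0 := by
  simp [phiF]

lemma phiF_nonneg' (a : Eucl N → Eucl N → ℝ → ℝ) (x y : Eucl N)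
    (hm : StrictMono (phiF a x y)) {t : ℝ} (ht : 0 ≤ t) : 0 ≤ phiF a x y t := by
  have := hm.monotone ht
  rwa [phiF_zero'] at this

lemma PhiF_nonneg' (a : Eucl N → Eucl N → ℝ → ℝ) (x y : Eucl N)
    (hm : StrictMono (phiF a x y)) {t : ℝ} (ht : 0 ≤ t) : 0 ≤ PhiF a x y t :=
  intervalIntegral.integral_nonneg ht fun τ hτ => phiF_nonneg' a x y hm hτ.1

lemma PhiF_mono' (a : Eucl N → Eucl N → ℝ → ℝ) (x y : Eucl N)
    (hc : Continuous (phiF a x y)) (hm : StrictMono (phiF a x y))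
    {t₁ t₂ : ℝ} (h0 : 0 ≤ t₁) (h : t₁ ≤ t₂) : PhiF a x y t₁ ≤ PhiF a x y t₂ := by
  have hadd := intervalIntegral.integral_add_adjacent_intervals
    (hc.intervalIntegrable (μ := volume) 0 t₁) (hc.intervalIntegrable (μ := volume) t₁ t₂)
  have hnn : 0 ≤ ∫ τ in t₁..t₂, phiF a x y τ :=
    intervalIntegral.integral_nonneg h fun τ hτ => phiF_nonneg' a x y hm (h0.trans hτ.1)
  unfold PhiF
  linarith [hadd]

lemma PhiF_tendsto' (a : Eucl N → Eucl N → ℝ → ℝ) (x y : Eucl N)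
    (hc : Continuous (phiF a x y)) (hm : StrictMono (phiF a x y))
    (hsurj : Function.Surjective (phiF a x y)) :
    Tendsto (PhiF a x y) atTop atTop := by
  obtain ⟨t₀, ht₀⟩ := hsurj 1
  have ht₀pos : 0 < t₀ := by
    have h01 : phiF a x y 0 < phiF a x y t₀ := by rw [phiF_zero', ht₀]; norm_num
    exact hm.lt_iff_lt.1 h01
  have hle : (fun t => t - t₀) ≤ᶠ[atTop] PhiF a x y := by
    filter_upwards [eventually_ge_atTop t₀] with t ht
    have h1 : ∫ _ in t₀..t, (1:ℝ) ≤ ∫ τ in t₀..t, phiF a x y τ := by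
      apply intervalIntegral.integral_mono_on ht intervalIntegrable_const
        (hc.intervalIntegrable (μ := volume) _ _)
      intro τ hτ
      rw [← ht₀]; exact hm.monotone hτ.1
    rw [intervalIntegral.integral_const, smul_eq_mul, mul_one] at h1
    have hadd := intervalIntegral.integral_add_adjacent_intervals
      (hc.intervalIntegrable (μ := volume) 0 t₀) (hc.intervalIntegrable (μ := volume) t₀ t)
    have hP0 : 0 ≤ PhiF a x y t₀ := PhiF_nonneg' a x y hm ht₀pos.le
    unfold PhiF at *
    linarith
  exact tendsto_atTop_mono' atTop hle (tendsto_atTop_add_const_right atTop (-t₀) tendsto_id)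

lemma PhiF_measurable' {α : Type*} [MeasurableSpace α] (a : Eucl N → Eucl N → ℝ → ℝ)
    (ha : Measurable fun p : Eucl N × Eucl N × ℝ => a p.1 p.2.1 p.2.2)
    {x y : α → Eucl N} (hx : Measurable x) (hy : Measurable y)
    {g : α → ℝ} (hg : Measurable g) (hg0 : ∀ z, 0 ≤ g z) :
    Measurable fun z => PhiF a (x z) (y z) (g z) := by
  have hphi : Measurable fun q : α × ℝ => phiF a (x q.1) (y q.1) q.2 := by
    unfold phiF
    apply Measurable.ite (measurableSet_eq_fun measurable_snd measurable_const)
      measurable_const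
    exact (ha.comp (((hx.comp measurable_fst).prodMk
      ((hy.comp measurable_fst).prodMk measurable_snd.abs)))).mul measurable_snd
  have hind : Measurable fun q : α × ℝ =>
      Set.indicator (Set.Ioc 0 (g q.1)) (fun τ => phiF a (x q.1) (y q.1) τ) q.2 := by
    have heq : ∀ q : α × ℝ, Set.indicator (Set.Ioc 0 (g q.1))
        (fun τ => phiF a (x q.1) (y q.1) τ) q.2
        = if 0 < q.2 ∧ q.2 ≤ g q.1 then phiF a (x q.1) (y q.1) q.2 else 0 := by
      intro q; rw [Set.indicator_apply]; simp [Set.mem_Ioc]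
    simp_rw [heq]
    apply Measurable.ite ?_ hphi measurable_const
    exact (measurableSet_lt measurable_const measurable_snd).inter
      (measurableSet_le measurable_snd (hg.comp measurable_fst))
  have key : ∀ z, PhiF a (x z) (y z) (g z)
      = ∫ τ, Set.indicator (Set.Ioc 0 (g z)) (fun τ => phiF a (x z) (y z) τ) τ := by
    intro z
    rw [PhiF, intervalIntegral.integral_of_le (hg0 z), ← integral_indicator measurableSet_Ioc]
  simp_rw [key]
  exact (hind.stronglyMeasurable.integral_prod_right').measurable

lemma lux_le_one' (m : ℝ → ℝ≥0∞)
    (hanti : ∀ l₁ l₂ : ℝ, 0 < l₁ → l₁ ≤ l₂ → m l₂ ≤ m l₁)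
    (h0 : lux m = 0) {lam : ℝ} (hlam : 0 < lam) : m lam ≤ 1 := by
  have hlt : lux m < ENNReal.ofReal lam := by
    rw [h0]; exact ENNReal.ofReal_pos.2 hlam
  unfold lux at hlt
  obtain ⟨l, hl, hlt'⟩ := sInf_lt_iff.1 hlt
  obtain ⟨l', hl'pos, rfl, hml'⟩ := hl
  have hll : l' < lam := (ENNReal.ofReal_lt_ofReal_iff hlam).1 hlt'
  exact (hanti l' lam hl'pos hll.le).trans hml'

lemma modO_anti' (a : Eucl N → Eucl N → ℝ → ℝ) (Ω : Set (Eucl N)) (u : Eucl N → ℝ)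
    (hm : ∀ x y, StrictMono (phiF a x y)) (hc : ∀ x y, Continuous (phiF a x y))
    {l₁ l₂ : ℝ} (h₁ : 0 < l₁) (h : l₁ ≤ l₂) : modO a Ω u l₂ ≤ modO a Ω u l₁ := by
  refine lintegral_mono fun x => ?_
  apply ENNReal.ofReal_le_ofReal
  have harg : |u x| / l₂ ≤ |u x| / l₁ := by gcongr
  exact PhiF_mono' a x x (hc x x) (hm x x) (div_nonneg (abs_nonneg _) (h₁.trans_le h).le) harg

lemma modQ_anti' (a : Eucl N → Eucl N → ℝ → ℝ) (s : ℝ) (Ω : Set (Eucl N))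
    (u : Eucl N → ℝ)
    (hm : ∀ x y, StrictMono (phiF a x y)) (hc : ∀ x y, Continuous (phiF a x y))
    {l₁ l₂ : ℝ} (h₁ : 0 < l₁) (h : l₁ ≤ l₂) : modQ a s Ω u l₂ ≤ modQ a s Ω u l₁ := by
  refine lintegral_mono fun p => ?_
  apply ENNReal.ofReal_le_ofReal
  set D := dist p.1 p.2 ^ s with hD
  have hD0 : 0 ≤ D := Real.rpow_nonneg dist_nonneg s
  have harg : |u p.1 - u p.2| / (l₂ * D) ≤ |u p.1 - u p.2| / (l₁ * D) := by
    rcases eq_or_lt_of_le hD0 with h0 | hpos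
    · rw [← h0, mul_zero, mul_zero]
    · gcongr
  have hnn : 0 ≤ |u p.1 - u p.2| / (l₂ * D) :=
    div_nonneg (abs_nonneg _) (mul_nonneg (h₁.trans_le h).le hD0)
  have hPhi := PhiF_mono' a p.1 p.2 (hc p.1 p.2) (hm p.1 p.2) hnn harg
  gcongr

end auxStatement0

/-- if `u` is measurable and `‖u‖_X = 0`, then `u = 0` a.e. in `ℝ^N`. -/
theorem statement0 (N : ℕ) (hN : 1 ≤ N)
    (Ω : Set (Eucl N)) (hΩo : IsOpen Ω) (hΩb : Bornology.IsBounded Ω) (hΩne : Ω.Nonempty)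
    (s : ℝ) (hs : s ∈ Set.Ioo (0:ℝ) 1)
    (a : Eucl N → Eucl N → ℝ → ℝ)
    (ha : Measurable fun p : Eucl N × Eucl N × ℝ => a p.1 p.2.1 p.2.2)
    (hmono : ∀ x y, StrictMono (phiF a x y))
    (hcont : ∀ x y, Continuous (phiF a x y))
    (hsurj : ∀ x y, Function.Surjective (phiF a x y))
    (β : Eucl N → ℝ) (hβm : Measurable β)
    (hβb : ∃ C : ℝ, ∀ᵐ x ∂(volume.restrict Ωᶜ), |β x| ≤ C)
    (hβ0 : ∀ᵐ x ∂(volume.restrict Ωᶜ), 0 ≤ β x)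
    (u : Eucl N → ℝ) (hu : Measurable u)
    (h0 : normX a s Ω β u = 0) :
    ∀ᵐ x : Eucl N, u x = 0 := by
  obtain ⟨hs0, hs1⟩ := hs
  have hsplit : lux (modQ a s Ω u) = 0 ∧ lux (modO a Ω u) = 0 := by
    unfold normX at h0
    have h1 := (add_eq_zero.1 h0).1
    exact ⟨(add_eq_zero.1 h1).1, (add_eq_zero.1 h1).2⟩
  have hQ : ∀ lam : ℝ, 0 < lam → modQ a s Ω u lam ≤ 1 := fun lam hl =>
    lux_le_one' _ (fun l₁ l₂ a1 a2 => modQ_anti' a s Ω u hmono hcont a1 a2) hsplit.1 hl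
  have hO : ∀ lam : ℝ, 0 < lam → modO a Ω u lam ≤ 1 := fun lam hl =>
    lux_le_one' _ (fun l₁ l₂ a1 a2 => modO_anti' a Ω u hmono hcont a1 a2) hsplit.2 hl
  set A : Set (Eucl N) := Ω ∩ {x | u x ≠ 0} with hAdef
  set B : Set (Eucl N) := Ωᶜ ∩ {x | u x ≠ 0} with hBdef
  have hne_meas : MeasurableSet {x : Eucl N | u x ≠ 0} := by
    have : {x : Eucl N | u x ≠ 0} = (u ⁻¹' {0})ᶜ := by ext x; simp
    rw [this]
    exact (hu (measurableSet_singleton 0)).compl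
  have hAmeas : MeasurableSet A := hΩo.measurableSet.inter hne_meas
  have hBmeas : MeasurableSet B := hΩo.measurableSet.compl.inter hne_meas
  -- Step 1: u = 0 a.e. on Ω
  have hA0 : volume A = 0 := by
    by_contra hA0
    set f : ℕ → Eucl N → ℝ≥0∞ := fun n x =>
      ENNReal.ofReal (PhiF a x x (|u x| / (1/((n:ℝ)+1)))) with hfdef
    have hfm : ∀ n, Measurable (f n) := by
      intro n
      exact ENNReal.measurable_ofReal.comp
        (PhiF_measurable' a ha measurable_id measurable_id
          (hu.abs.div_const _) (fun z => div_nonneg (abs_nonneg _) (by positivity)))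
    have hbound : ∀ n : ℕ, ∫⁻ x in Ω, f n x ≤ 1 := fun n => hO _ (by positivity)
    have hlim : ∀ x ∈ A, Tendsto (fun n => f n x) atTop (𝓝 ⊤) := by
      intro x hx
      have hux : 0 < |u x| := abs_pos.2 hx.2
      have h1 : Tendsto (fun n : ℕ => |u x| / (1/((n:ℝ)+1))) atTop atTop := by
        have heq : ∀ n : ℕ, |u x| / (1/((n:ℝ)+1)) = |u x| * ((n:ℝ)+1) := by
          intro n
          have hn : ((n:ℝ)+1) ≠ 0 := by positivity
          field_simp
        simp_rw [heq]
        exact Tendsto.const_mul_atTop hux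
          (tendsto_atTop_add_const_right atTop 1 tendsto_natCast_atTop_atTop)
      exact ENNReal.tendsto_ofReal_atTop.comp
        ((PhiF_tendsto' a x x (hcont x x) (hmono x x) (hsurj x x)).comp h1)
    have key : (⊤:ℝ≥0∞) * volume A ≤ 1 := by
      calc (⊤:ℝ≥0∞) * volume A = ∫⁻ _ in A, ⊤ := (setLIntegral_const A ⊤).symm
        _ = ∫⁻ x in A, liminf (fun n => f n x) atTop := by
            refine setLIntegral_congr_fun hAmeas ?_
            intro x hx; exact ((hlim x hx).liminf_eq).symm
        _ ≤ ∫⁻ x in Ω, liminf (fun n => f n x) atTop :=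
            lintegral_mono_set inter_subset_left
        _ ≤ liminf (fun n => ∫⁻ x in Ω, f n x) atTop := lintegral_liminf_le hfm
        _ ≤ liminf (fun _ : ℕ => (1:ℝ≥0∞)) atTop :=
            Filter.liminf_le_liminf (Filter.Eventually.of_forall hbound)
        _ = 1 := liminf_const 1
    rw [ENNReal.top_mul hA0] at key
    simp at key
  -- Step 2: u = 0 a.e. on Ωᶜ
  have hB0 : volume B = 0 := by
    by_contra hB0
    set Ω' : Set (Eucl N) := Ω \ A with hΩ'def
    have hΩ'meas : MeasurableSet Ω' := hΩo.measurableSet.diff hAmeas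
    have hΩ'vol : volume Ω' ≠ 0 := by
      rw [measure_diff_null hA0]
      exact (hΩo.measure_pos volume hΩne).ne'
    set S : Set (Eucl N × Eucl N) := Ω' ×ˢ B with hSdef
    have hSmeas : MeasurableSet S := hΩ'meas.prod hBmeas
    have hSsub : S ⊆ Qset Ω := by
      rintro ⟨x, y⟩ ⟨hx, hy⟩
      intro hmem
      exact hmem.1 hx.1
    have hSvol : volume S ≠ 0 := by
      rw [hSdef, MeasureTheory.Measure.volume_eq_prod, Measure.prod_prod]
      exact mul_ne_zero hΩ'vol hB0
    set f : ℕ → Eucl N × Eucl N → ℝ≥0∞ := fun n p =>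
      ENNReal.ofReal (PhiF a p.1 p.2
        (|u p.1 - u p.2| / ((1/((n:ℝ)+1)) * dist p.1 p.2 ^ s)) / dist p.1 p.2 ^ (N:ℝ))
      with hfdef
    have hgm : ∀ n : ℕ, Measurable fun p : Eucl N × Eucl N =>
        |u p.1 - u p.2| / ((1/((n:ℝ)+1)) * dist p.1 p.2 ^ s) := by
      intro n
      exact ((hu.comp measurable_fst).sub (hu.comp measurable_snd)).abs.div
        (measurable_const.mul
          ((continuous_dist.rpow_const (fun p => Or.inr hs0.le)).measurable))
    have hfm : ∀ n, Measurable (f n) := by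
      intro n
      apply ENNReal.measurable_ofReal.comp
      apply Measurable.div
      · exact PhiF_measurable' a ha measurable_fst measurable_snd (hgm n)
          (fun p => div_nonneg (abs_nonneg _)
            (mul_nonneg (by positivity) (Real.rpow_nonneg dist_nonneg _)))
      · exact (continuous_dist.rpow_const (fun p => Or.inr (Nat.cast_nonneg N))).measurable
    have hbound : ∀ n : ℕ, ∫⁻ p in Qset Ω, f n p ≤ 1 := fun n => hQ _ (by positivity)
    have hlim : ∀ p ∈ S, Tendsto (fun n => f n p) atTop (𝓝 ⊤) := by
      rintro ⟨x, y⟩ ⟨hx, hy⟩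
      have hux0 : u x = 0 := by
        by_contra hne
        exact hx.2 ⟨hx.1, hne⟩
      have huy : 0 < |u y| := abs_pos.2 hy.2
      have hd : 0 < dist x y := by
        rw [dist_pos]
        rintro rfl
        exact hy.1 hx.1
      have hds : 0 < dist x y ^ s := Real.rpow_pos_of_pos hd s
      have hdN : 0 < dist x y ^ (N:ℝ) := Real.rpow_pos_of_pos hd _
      have harg : ∀ n : ℕ, |u x - u y| / ((1/((n:ℝ)+1)) * dist x y ^ s)
          = (|u y| / dist x y ^ s) * ((n:ℝ)+1) := by
        intro n
        rw [hux0, zero_sub, abs_neg]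
        have hn : ((n:ℝ)+1) ≠ 0 := by positivity
        field_simp
      have h1 : Tendsto (fun n : ℕ =>
          |u x - u y| / ((1/((n:ℝ)+1)) * dist x y ^ s)) atTop atTop := by
        simp_rw [harg]
        exact Tendsto.const_mul_atTop (div_pos huy hds)
          (tendsto_atTop_add_const_right atTop 1 tendsto_natCast_atTop_atTop)
      have h2 : Tendsto (fun n : ℕ => PhiF a x y
          (|u x - u y| / ((1/((n:ℝ)+1)) * dist x y ^ s)) / dist x y ^ (N:ℝ)) atTop atTop :=
        Tendsto.atTop_div_const hdN
          ((PhiF_tendsto' a x y (hcont x y) (hmono x y) (hsurj x y)).comp h1)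
      exact ENNReal.tendsto_ofReal_atTop.comp h2
    have key : (⊤:ℝ≥0∞) * volume S ≤ 1 := by
      calc (⊤:ℝ≥0∞) * volume S = ∫⁻ _ in S, ⊤ := (setLIntegral_const S ⊤).symm
        _ = ∫⁻ p in S, liminf (fun n => f n p) atTop := by
            refine setLIntegral_congr_fun hSmeas ?_
            intro p hp; exact ((hlim p hp).liminf_eq).symm
        _ ≤ ∫⁻ p in Qset Ω, liminf (fun n => f n p) atTop := lintegral_mono_set hSsub
        _ ≤ liminf (fun n => ∫⁻ p in Qset Ω, f n p) atTop := lintegral_liminf_le hfm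
        _ ≤ liminf (fun _ : ℕ => (1:ℝ≥0∞)) atTop :=
            Filter.liminf_le_liminf (Filter.Eventually.of_forall hbound)
        _ = 1 := liminf_const 1
    rw [ENNReal.top_mul hSvol] at key
    simp at key
  have hall : volume {x : Eucl N | u x ≠ 0} = 0 := by
    have hsub : {x : Eucl N | u x ≠ 0} ⊆ A ∪ B := by
      intro x hx
      by_cases hxΩ : x ∈ Ω
      · exact Or.inl ⟨hxΩ, hx⟩
      · exact Or.inr ⟨hxΩ, hx⟩
    exact measure_mono_null hsub (measure_union_null hA0 hB0)
  exact ae_iff.2 hall
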